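/- Let K be a field of characteristic zero, s ∈ K invertible, q = s², and let R = R(q) be the quantum trigonometric R-matrix R(q) = 1 + Σ_{k,l}[(q-q⁻¹)θ(l-k) + ((s-s⁻¹)²/2)δ_{k,l}]E_{k,l}⊗E_{l,k}. Let S be an associative unital K-algebra, and let A, B be N×N matrices with entries in S satisfying: (a) R(q)·A₁·R^{t₁}(q)·A₂ = A₂·R^{t₁}(q)·A₁·R(q); (b) R(q)·B₁·B₂ = B₂·B₁·R(q); (c) A₂·B₁·R(q) = B₁·R^{t₂}(q⁻¹)·A₂; and the space-swapped versions of (c) obtained by conjugating with the permutation matrix P. Then the matrix Ã := B·A·Bᵀ also satisfies relation (a): R(q)·Ã₁·R^{t₁}(q)·Ã₂ = Ã₂·R^{t₁}(q)·Ã₁·R(q). -/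

import Mathlib

open Matrix Kronecker

/-- The step function θ with values in a field: θ(x)=1 for x>0, θ(0)=1/2, θ(x)=0 for x<0. -/
noncomputable def thetaK (K : Type*) [Field K] (x : ℤ) : K :=
  if 0 < x then 1 else if x = 0 then 2⁻¹ else 0

/-- The quantum trigonometric R-matrix
`R(q) = 1 + Σ_{k,l} [(q-q⁻¹)θ(l-k) + ((s-s⁻¹)²/2)δ_{k,l}]·E_{k,l} ⊗ E_{l,k}`, with `q = s²`. -/
noncomputable def Rq (N : ℕ) (K : Type*) [Field K] (q s : K) :
    Matrix (Fin N × Fin N) (Fin N × Fin N) K :=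
  1 + ∑ k : Fin N, ∑ l : Fin N,
    ((q - q⁻¹) * thetaK K ((l : ℤ) - (k : ℤ))
        + (s - s⁻¹) ^ 2 / 2 * (if k = l then 1 else 0)) •
      (Matrix.single k l (1 : K) ⊗ₖ Matrix.single l k (1 : K))

/-- Embedding `X₁ = X ⊗ 1` into the first tensor factor, over a possibly
noncommutative ring. -/
def emb1 {N : ℕ} {S : Type*} [Ring S] (X : Matrix (Fin N) (Fin N) S) :
    Matrix (Fin N × Fin N) (Fin N × Fin N) S :=
  Matrix.of fun p q => X p.1 q.1 * (if p.2 = q.2 then 1 else 0)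

/-- Embedding `X₂ = 1 ⊗ X` into the second tensor factor. -/
def emb2 {N : ℕ} {S : Type*} [Ring S] (X : Matrix (Fin N) (Fin N) S) :
    Matrix (Fin N × Fin N) (Fin N × Fin N) S :=
  Matrix.of fun p q => (if p.1 = q.1 then 1 else 0) * X p.2 q.2

/-- Partial transpose in the first tensor factor. -/
def pt1 {N : ℕ} {S : Type*} [Ring S]
    (M : Matrix (Fin N × Fin N) (Fin N × Fin N) S) :
    Matrix (Fin N × Fin N) (Fin N × Fin N) S :=
  Matrix.of fun p q => M (q.1, p.2) (p.1, q.2)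

/-- Partial transpose in the second tensor factor. -/
def pt2 {N : ℕ} {S : Type*} [Ring S]
    (M : Matrix (Fin N × Fin N) (Fin N × Fin N) S) :
    Matrix (Fin N × Fin N) (Fin N × Fin N) S :=
  Matrix.of fun p q => M (p.1, q.2) (q.1, p.2)

/-- The permutation matrix `P_{(i,k),(j,l)} = δ_{i,l}·δ_{k,j}`. -/
def permMat (N : ℕ) (S : Type*) [Ring S] :
    Matrix (Fin N × Fin N) (Fin N × Fin N) S :=
  Matrix.of fun p q => if p.1 = q.2 ∧ p.2 = q.1 then 1 else 0
section Helpers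

variable {N : ℕ} {K : Type*} [Field K]

/-- coefficient of the R-matrix -/
noncomputable def ccoef (K : Type*) [Field K] (q s : K) (a b : Fin N) : K :=
  (q - q⁻¹) * thetaK K ((b : ℤ) - (a : ℤ)) + (s - s⁻¹) ^ 2 / 2 * (if a = b then 1 else 0)

/-- generic R-form matrix -/
def Rform (f : Fin N → Fin N → K) : Matrix (Fin N × Fin N) (Fin N × Fin N) K :=
  Matrix.of fun p q => (if p = q then 1 else 0) +
    (if p.1 = q.2 ∧ p.2 = q.1 then f p.1 p.2 else 0)

/-- generic D-form matrix -/
def Dform (h : Fin N → Fin N → K) : Matrix (Fin N × Fin N) (Fin N × Fin N) K :=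
  Matrix.of fun p q => (if p = q then 1 else 0) +
    (if p.1 = p.2 ∧ q.1 = q.2 then h p.1 q.1 else 0)

lemma Rq_eq_Rform (q s : K) : Rq N K q s = Rform (ccoef K q s) := by
  ext ⟨a, b⟩ ⟨c, d⟩
  simp only [Rq, Rform, Matrix.add_apply, Matrix.one_apply, Matrix.of_apply, ccoef,
    Matrix.sum_apply, Matrix.smul_apply, Matrix.kroneckerMap_apply,
    Matrix.single, smul_eq_mul, Matrix.of_apply]
  congr 1
  simp only [mul_ite, mul_one, mul_zero, ite_and]
  rw [Finset.sum_comm]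
  rw [Finset.sum_eq_single b]
  · rw [Finset.sum_eq_single a]
    · by_cases h1 : a = d
      · by_cases h2 : b = c
        · simp [h1, h2]
        · simp [h1, h2]
      · by_cases h2 : b = c <;> simp [h1, h2]
    · intro k _ hk
      simp [hk]
    · simp
  · intro l _ hl
    rw [Finset.sum_eq_zero]
    intro k _
    simp [hl]
  · simp

end Helpers
section Helpers2

variable {N : ℕ} {K : Type*} [Field K]

lemma pt1_Rform (f : Fin N → Fin N → K) :
    pt1 (Rform f) = Dform (fun x y => f y x) := by
  ext ⟨a, b⟩ ⟨c, d⟩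
  simp only [pt1, Rform, Dform, Matrix.of_apply]
  congr 1
  · by_cases h1 : a = c <;> by_cases h2 : b = d <;>
      simp [h1, h2, Prod.ext_iff, eq_comm]
  · by_cases h1 : a = b <;> by_cases h2 : c = d <;>
      simp [h1, h2, eq_comm]

lemma pt2_Rform (f : Fin N → Fin N → K) :
    pt2 (Rform f) = Dform f := by
  ext ⟨a, b⟩ ⟨c, d⟩
  simp only [pt2, Rform, Dform, Matrix.of_apply]
  congr 1
  · by_cases h1 : a = c <;> by_cases h2 : b = d <;>
      simp [h1, h2, Prod.ext_iff, eq_comm]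
  · by_cases h1 : a = b <;> by_cases h2 : c = d <;>
      simp [h1, h2, eq_comm]

lemma transpose_Rform (f : Fin N → Fin N → K) :
    (Rform f)ᵀ = Rform (fun a b => f b a) := by
  ext ⟨a, b⟩ ⟨c, d⟩
  simp only [Matrix.transpose_apply, Rform, Matrix.of_apply]
  congr 1
  · simp [Prod.ext_iff, eq_comm, and_comm]
  · by_cases h1 : a = d <;> by_cases h2 : b = c <;>
      simp [h1, h2, eq_comm]

end Helpers2
section Helpers3

variable {N : ℕ} {K : Type*} [Field K]

lemma Rform_mul_apply (f : Fin N → Fin N → K)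
    (M : Matrix (Fin N × Fin N) (Fin N × Fin N) K) (p q : Fin N × Fin N) :
    (Rform f * M) p q = M p q + f p.1 p.2 * M (p.2, p.1) q := by
  rcases p with ⟨a, b⟩
  simp only [Matrix.mul_apply, Rform, Matrix.of_apply, add_mul, ite_mul, one_mul, zero_mul,
    Finset.sum_add_distrib, Fintype.sum_prod_type]
  congr 1
  · rw [Finset.sum_comm]
    simp [Prod.ext_iff, Finset.sum_ite_eq, Finset.sum_ite_eq', ite_and]
  · simp [Finset.sum_ite_eq, Finset.sum_ite_eq', ite_and, eq_comm]

lemma mul_Rform_apply (f : Fin N → Fin N → K)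
    (M : Matrix (Fin N × Fin N) (Fin N × Fin N) K) (p q : Fin N × Fin N) :
    (M * Rform f) p q = M p q + M p (q.2, q.1) * f q.2 q.1 := by
  rcases q with ⟨c, d⟩
  simp only [Matrix.mul_apply, Rform, Matrix.of_apply, mul_add, mul_ite, mul_one, mul_zero,
    Finset.sum_add_distrib, Fintype.sum_prod_type]
  congr 1
  · simp [Prod.ext_iff, Finset.sum_ite_eq, Finset.sum_ite_eq', ite_and]
  · simp [Finset.sum_ite_eq, Finset.sum_ite_eq', ite_and, eq_comm]

lemma Dform_mul_apply (h : Fin N → Fin N → K)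
    (M : Matrix (Fin N × Fin N) (Fin N × Fin N) K) (p q : Fin N × Fin N) :
    (Dform h * M) p q = M p q
      + (if p.1 = p.2 then (1:K) else 0) * ∑ x, h p.1 x * M (x, x) q := by
  rcases p with ⟨a, b⟩
  simp only [Dform, Matrix.mul_apply, Matrix.of_apply, add_mul, ite_mul, one_mul, zero_mul,
    Finset.sum_add_distrib, Fintype.sum_prod_type]
  congr 1
  · simp [Prod.ext_iff, Finset.sum_ite_eq, Finset.sum_ite_eq', ite_and]
  · by_cases hab : a = b
    · subst hab
      simp [Finset.mul_sum, Finset.sum_ite_eq, Finset.sum_ite_eq', ite_and]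
    · simp [hab]

lemma mul_Dform_apply (h : Fin N → Fin N → K)
    (M : Matrix (Fin N × Fin N) (Fin N × Fin N) K) (p q : Fin N × Fin N) :
    (M * Dform h) p q = M p q
      + (if q.1 = q.2 then (1:K) else 0) * ∑ x, M p (x, x) * h x q.1 := by
  rcases q with ⟨c, d⟩
  simp only [Dform, Matrix.mul_apply, Matrix.of_apply, mul_add, mul_ite, mul_one, mul_zero,
    Finset.sum_add_distrib, Fintype.sum_prod_type]
  congr 1
  · simp [Prod.ext_iff, Finset.sum_ite_eq, Finset.sum_ite_eq', ite_and]
  · by_cases hcd : c = d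
    · subst hcd
      simp [Finset.mul_sum, Finset.sum_ite_eq, Finset.sum_ite_eq', ite_and, mul_comm]
    · simp [hcd]

end Helpers3
section Helpers4

variable {N : ℕ} {K : Type*} [Field K] {S : Type*} [Ring S]

lemma permMat_mul_apply (M : Matrix (Fin N × Fin N) (Fin N × Fin N) S)
    (p q : Fin N × Fin N) : (permMat N S * M) p q = M (p.2, p.1) q := by
  simp [Matrix.mul_apply, permMat, Fintype.sum_prod_type, ite_and,
    Finset.sum_ite_eq, Finset.sum_ite_eq']

lemma mul_permMat_apply (M : Matrix (Fin N × Fin N) (Fin N × Fin N) S)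
    (p q : Fin N × Fin N) : (M * permMat N S) p q = M p (q.2, q.1) := by
  simp [Matrix.mul_apply, permMat, Fintype.sum_prod_type, ite_and, eq_comm,
    Finset.sum_ite_eq, Finset.sum_ite_eq']

lemma conjP_apply (M : Matrix (Fin N × Fin N) (Fin N × Fin N) S)
    (p q : Fin N × Fin N) :
    (permMat N S * M * permMat N S) p q = M (p.2, p.1) (q.2, q.1) := by
  rw [mul_permMat_apply, permMat_mul_apply]

lemma permMat_mul_permMat : permMat N S * permMat N S = 1 := by
  ext p q
  rw [permMat_mul_apply]
  rcases p with ⟨a, b⟩; rcases q with ⟨c, d⟩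
  simp [permMat, Matrix.one_apply, Prod.ext_iff, and_comm]

lemma conjP_emb1 (X : Matrix (Fin N) (Fin N) S) :
    permMat N S * emb1 X * permMat N S = emb2 X := by
  ext ⟨a, b⟩ ⟨c, d⟩
  rw [conjP_apply]
  by_cases h : a = c <;> simp [emb1, emb2, h]

lemma conjP_emb2 (X : Matrix (Fin N) (Fin N) S) :
    permMat N S * emb2 X * permMat N S = emb1 X := by
  ext ⟨a, b⟩ ⟨c, d⟩
  rw [conjP_apply]
  by_cases h : b = d <;> simp [emb1, emb2, h]

lemma conjP_Rform (f : Fin N → Fin N → K) :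
    permMat N K * Rform f * permMat N K = (Rform f)ᵀ := by
  ext ⟨a, b⟩ ⟨c, d⟩
  rw [conjP_apply, transpose_Rform]
  simp only [Rform, Matrix.of_apply]
  congr 1
  · simp [Prod.ext_iff, and_comm]
  · by_cases h1 : a = d <;> by_cases h2 : b = c <;> simp [h1, h2, eq_comm]

lemma conjP_Dform (h : Fin N → Fin N → K) :
    permMat N K * Dform h * permMat N K = Dform h := by
  ext ⟨a, b⟩ ⟨c, d⟩
  rw [conjP_apply]
  simp only [Dform, Matrix.of_apply]
  congr 1
  · simp [Prod.ext_iff, and_comm]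
  · by_cases h1 : a = b <;> by_cases h2 : c = d <;>
      simp [h1, h2, eq_comm, and_comm]

lemma Rform_mul_eq_one (f g : Fin N → Fin N → K)
    (hfg : ∀ a b : Fin N, a ≠ b → f a b + g a b = 0)
    (hfg2 : ∀ a b : Fin N, a ≠ b → f a b * g b a = 0)
    (hd : ∀ a : Fin N, (1 + f a a) * (1 + g a a) = 1) :
    Rform f * Rform g = 1 := by
  ext ⟨a, b⟩ ⟨c, d⟩
  rw [Rform_mul_apply]
  simp only [Rform, Matrix.of_apply, Matrix.one_apply]
  by_cases h1 : a = d
  · by_cases h2 : b = c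
    · subst h1; subst h2
      by_cases hab : a = b
      · subst hab
        simp only [Prod.mk.injEq, and_self, if_pos rfl, if_true, and_true]
        linear_combination hd a
      · have h3 : ¬((a, b) = (b, a)) := by simp [Prod.ext_iff]; intro h; exact absurd h hab
        have h5 : ¬(b = a ∧ a = b) := fun hh => hab hh.1.symm
        simp only [h3, if_false, Prod.mk.injEq, and_self, if_pos rfl, if_true, and_true,
          if_neg h3, if_neg h5]
        linear_combination hfg a b hab
    · have hx : ¬(a = d ∧ b = c) := by tauto
      have hy : ¬((b, a) = (c, d)) := by simp only [Prod.mk.injEq]; tauto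
      have hz : ¬(b = c ∧ a = d) := by tauto
      simp only [hx, hy, hz, if_neg, if_false, add_zero, mul_zero, zero_add]
      by_cases hac : a = c <;> by_cases hbd : b = d <;> simp [hac, hbd]
      exfalso
      have : b = c := by rw [hbd, ← h1]; exact hac
      exact h2 this
  · have hx : ¬(a = d ∧ b = c) := by tauto
    have hy : ¬((b, a) = (c, d)) := by simp only [Prod.mk.injEq]; tauto
    have hz : ¬(b = c ∧ a = d) := by tauto
    simp only [hx, hy, hz, if_neg, if_false, add_zero, mul_zero, zero_add]
    by_cases hac : a = c <;> by_cases hbd : b = d <;> simp [hac, hbd]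
    exact mul_eq_zero.mp (hfg2 c d (fun h => h1 (hac.trans h)))

end Helpers4
section Helpers5

variable {N : ℕ} {K : Type*} [Field K]

lemma Rform_comm_Dform (f h : Fin N → Fin N → K) (γ : K) (hf : ∀ a, f a a = γ) :
    Rform f * Dform h = Dform h * Rform f := by
  ext ⟨a, b⟩ ⟨c, d⟩
  rw [Rform_mul_apply, mul_Rform_apply]
  congr 1
  simp only [Dform, Matrix.of_apply, Prod.mk.injEq]
  by_cases h1 : b = c <;> by_cases h2 : a = d <;> by_cases h3 : a = b <;>
    by_cases h4 : c = d <;> simp_all [hf] <;>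
      first
        | ring1
        | simp [Ne.symm h4]
        | (intro hx; exact absurd hx.symm h2)
        | (intro hx; exact absurd hx.symm h1)
        | (intro hx; exact absurd hx.symm h3)
        | (intro hx; exact absurd hx.symm h4)
        | (intro hx; exact absurd hx h2)
        | (intro hx; exact absurd hx h1)

end Helpers5
section Helpers6

variable {N : ℕ} {K : Type*} [Field K] [CharZero K]

lemma ccoef_diag {q s : K} (hq : q = s ^ 2) (hs : s ≠ 0) (a : Fin N) :
    ccoef K q s a a = q - 1 := by
  have hq0 : q ≠ 0 := by rw [hq]; exact pow_ne_zero 2 hs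
  simp only [ccoef, thetaK, sub_self, lt_irrefl, if_false, if_pos rfl, if_true, mul_one]
  rw [hq]
  field_simp
  ring

lemma ccoef_sum {q s : K} {a b : Fin N} (hab : a ≠ b) :
    ccoef K q s a b + ccoef K q⁻¹ s⁻¹ a b = 0 := by
  simp only [ccoef, if_neg hab, mul_zero, add_zero, inv_inv]
  ring

lemma ccoef_prod {q s q' s' : K} {a b : Fin N} (hab : a ≠ b) :
    ccoef K q s a b * ccoef K q' s' b a = 0 := by
  have hco : ((b : ℤ) - (a : ℤ)) ≠ 0 := by
    intro h
    apply hab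
    have : (a : ℤ) = (b : ℤ) := by omega
    exact Fin.ext (by exact_mod_cast this)
  simp only [ccoef, if_neg hab, if_neg (Ne.symm hab), mul_zero, add_zero]
  rcases lt_trichotomy (0 : ℤ) ((b : ℤ) - (a : ℤ)) with h | h | h
  · have h2 : ¬(0 : ℤ) < (a : ℤ) - (b : ℤ) := by omega
    have h3 : ((a : ℤ) - (b : ℤ)) ≠ 0 := by omega
    simp only [thetaK, if_neg h2, if_neg h3, mul_zero]
  · exact absurd h.symm hco
  · have h2 : ¬(0 : ℤ) < (b : ℤ) - (a : ℤ) := by omega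
    simp only [thetaK, if_neg h2, if_neg hco, mul_zero, zero_mul]

variable {q s : K}

lemma Rq_mul_Rq_inv (hq : q = s ^ 2) (hs : s ≠ 0) :
    Rq N K q s * Rq N K q⁻¹ s⁻¹ = 1 := by
  have hq0 : q ≠ 0 := by rw [hq]; exact pow_ne_zero 2 hs
  have hqi : q⁻¹ = (s⁻¹) ^ 2 := by rw [hq, inv_pow]
  rw [Rq_eq_Rform, Rq_eq_Rform]
  apply Rform_mul_eq_one
  · intro a b hab; exact ccoef_sum hab
  · intro a b hab; exact ccoef_prod hab
  · intro a
    rw [ccoef_diag hq hs, ccoef_diag hqi (inv_ne_zero hs)]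
    field_simp
    ring

lemma Rq_inv_mul_Rq (hq : q = s ^ 2) (hs : s ≠ 0) :
    Rq N K q⁻¹ s⁻¹ * Rq N K q s = 1 :=
  mul_eq_one_comm.mp (Rq_mul_Rq_inv hq hs)

lemma Rq_comm_pt1 (hq : q = s ^ 2) (hs : s ≠ 0) :
    Rq N K q s * pt1 (Rq N K q s) = pt1 (Rq N K q s) * Rq N K q s := by
  rw [Rq_eq_Rform (q := q), pt1_Rform]
  exact Rform_comm_Dform _ _ (q - 1) (ccoef_diag hq hs)

lemma Rq_inv_comm_pt1 (hq : q = s ^ 2) (hs : s ≠ 0) :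
    Rq N K q⁻¹ s⁻¹ * pt1 (Rq N K q s) = pt1 (Rq N K q s) * Rq N K q⁻¹ s⁻¹ := by
  have hqi : q⁻¹ = (s⁻¹) ^ 2 := by rw [hq, inv_pow]
  rw [Rq_eq_Rform (q := q), Rq_eq_Rform (q := q⁻¹), pt1_Rform]
  exact Rform_comm_Dform _ _ (q⁻¹ - 1) (ccoef_diag hqi (inv_ne_zero hs))

lemma Rq_comm_pt2_inv (hq : q = s ^ 2) (hs : s ≠ 0) :
    Rq N K q s * pt2 (Rq N K q⁻¹ s⁻¹) = pt2 (Rq N K q⁻¹ s⁻¹) * Rq N K q s := by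
  rw [Rq_eq_Rform (q := q), Rq_eq_Rform (q := q⁻¹), pt2_Rform]
  exact Rform_comm_Dform _ _ (q - 1) (ccoef_diag hq hs)

lemma Rq_transpose_comm_pt1 (hq : q = s ^ 2) (hs : s ≠ 0) :
    (Rq N K q s)ᵀ * pt1 (Rq N K q s) = pt1 (Rq N K q s) * (Rq N K q s)ᵀ := by
  rw [Rq_eq_Rform (q := q), pt1_Rform, transpose_Rform]
  exact Rform_comm_Dform _ _ (q - 1) (fun a => ccoef_diag hq hs a)

lemma conjP_Rq (q s : K) :
    permMat N K * Rq N K q s * permMat N K = (Rq N K q s)ᵀ := by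
  rw [Rq_eq_Rform]; exact conjP_Rform _

lemma conjP_Rq_transpose (q s : K) :
    permMat N K * (Rq N K q s)ᵀ * permMat N K = Rq N K q s := by
  have h := conjP_Rq (N := N) (K := K) q s
  have h2 : permMat N K * (permMat N K * Rq N K q s * permMat N K) * permMat N K
      = permMat N K * (Rq N K q s)ᵀ * permMat N K := by rw [h]
  rw [← h2]
  rw [show permMat N K * (permMat N K * Rq N K q s * permMat N K) * permMat N K
      = (permMat N K * permMat N K) * Rq N K q s * (permMat N K * permMat N K) by
    noncomm_ring]
  rw [permMat_mul_permMat, one_mul, mul_one]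

lemma conjP_pt1_Rq (q s : K) :
    permMat N K * pt1 (Rq N K q s) * permMat N K = pt1 (Rq N K q s) := by
  rw [Rq_eq_Rform, pt1_Rform]; exact conjP_Dform _

lemma conjP_pt2_Rq (q s : K) :
    permMat N K * pt2 (Rq N K q s) * permMat N K = pt2 (Rq N K q s) := by
  rw [Rq_eq_Rform, pt2_Rform]; exact conjP_Dform _

end Helpers6
section Helpers7

variable {N : ℕ} {K : Type*} [Field K] {S : Type*} [Ring S] [Algebra K S]

lemma pt1_map (M : Matrix (Fin N × Fin N) (Fin N × Fin N) K) :
    pt1 (M.map (algebraMap K S)) = (pt1 M).map (algebraMap K S) := rfl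

lemma pt2_map (M : Matrix (Fin N × Fin N) (Fin N × Fin N) K) :
    pt2 (M.map (algebraMap K S)) = (pt2 M).map (algebraMap K S) := rfl

lemma transpose_map' (M : Matrix (Fin N × Fin N) (Fin N × Fin N) K) :
    (M.map (algebraMap K S))ᵀ = Mᵀ.map (algebraMap K S) := rfl

lemma permMat_map : (permMat N K).map (algebraMap K S) = permMat N S := by
  ext p q
  simp [permMat, Matrix.map_apply, apply_ite (algebraMap K S)]

lemma e1l (X : Matrix (Fin N) (Fin N) S) (M : Matrix (Fin N × Fin N) (Fin N × Fin N) S)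
    (p q : Fin N × Fin N) : (emb1 X * M) p q = ∑ j, X p.1 j * M (j, p.2) q := by
  simp [Matrix.mul_apply, emb1, Fintype.sum_prod_type, mul_ite, ite_mul,
    Finset.sum_ite_eq, Finset.sum_ite_eq']

lemma e1r (X : Matrix (Fin N) (Fin N) S) (M : Matrix (Fin N × Fin N) (Fin N × Fin N) S)
    (p q : Fin N × Fin N) : (M * emb1 X) p q = ∑ j, M p (j, q.2) * X j q.1 := by
  simp [Matrix.mul_apply, emb1, Fintype.sum_prod_type, mul_ite, ite_mul, eq_comm,
    Finset.sum_ite_eq, Finset.sum_ite_eq']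

lemma e2l (X : Matrix (Fin N) (Fin N) S) (M : Matrix (Fin N × Fin N) (Fin N × Fin N) S)
    (p q : Fin N × Fin N) : (emb2 X * M) p q = ∑ j, X p.2 j * M (p.1, j) q := by
  simp [Matrix.mul_apply, emb2, Fintype.sum_prod_type, mul_ite, ite_mul,
    Finset.sum_ite_eq, Finset.sum_ite_eq']

lemma e2r (X : Matrix (Fin N) (Fin N) S) (M : Matrix (Fin N × Fin N) (Fin N × Fin N) S)
    (p q : Fin N × Fin N) : (M * emb2 X) p q = ∑ j, M p (q.1, j) * X j q.2 := by
  simp [Matrix.mul_apply, emb2, Fintype.sum_prod_type, mul_ite, ite_mul, eq_comm,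
    Finset.sum_ite_eq, Finset.sum_ite_eq']

lemma emb1_mul (X Y : Matrix (Fin N) (Fin N) S) :
    emb1 (X * Y) = emb1 X * emb1 Y := by
  ext p q
  rw [e1l]
  simp [emb1, Matrix.mul_apply, Finset.sum_mul, ite_mul, mul_ite]

lemma emb2_mul (X Y : Matrix (Fin N) (Fin N) S) :
    emb2 (X * Y) = emb2 X * emb2 Y := by
  ext p q
  rw [e2l]
  simp [emb2, Matrix.mul_apply, Finset.sum_mul, ite_mul, mul_ite]

lemma pt1_pt2_eq_transpose (M : Matrix (Fin N × Fin N) (Fin N × Fin N) S) :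
    pt1 (pt2 M) = Mᵀ := rfl

end Helpers7
section Helpers8

variable {N : ℕ} {K : Type*} [Field K] {S : Type*} [Ring S] [Algebra K S]

lemma cent_comm (Rc : Matrix (Fin N × Fin N) (Fin N × Fin N) K) (x : S)
    (p q : Fin N × Fin N) :
    x * (Rc.map (algebraMap K S)) p q = (Rc.map (algebraMap K S)) p q * x := by
  simp [Matrix.map_apply, Algebra.commutes]

lemma PT1a (Rc : Matrix (Fin N × Fin N) (Fin N × Fin N) K)
    (X Y : Matrix (Fin N) (Fin N) S) :
    pt1 (Rc.map (algebraMap K S) * emb1 X * emb2 Y)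
      = emb1 Xᵀ * pt1 (Rc.map (algebraMap K S)) * emb2 Y := by
  ext p q
  show (Rc.map (algebraMap K S) * emb1 X * emb2 Y) (q.1, p.2) (p.1, q.2)
      = (emb1 Xᵀ * pt1 (Rc.map (algebraMap K S)) * emb2 Y) p q
  simp only [e2r, e1r, e1l]
  refine Finset.sum_congr rfl fun j _ => ?_
  congr 1
  refine Finset.sum_congr rfl fun i _ => ?_
  exact (cent_comm Rc (X i p.1) (q.1, p.2) (i, j)).symm

lemma PT1b (Rc : Matrix (Fin N × Fin N) (Fin N × Fin N) K)
    (X Y : Matrix (Fin N) (Fin N) S) :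
    pt1 (emb2 Y * emb1 X * Rc.map (algebraMap K S))
      = emb2 Y * pt1 (Rc.map (algebraMap K S)) * emb1 Xᵀ := by
  ext p q
  show (emb2 Y * emb1 X * Rc.map (algebraMap K S)) (q.1, p.2) (p.1, q.2)
      = (emb2 Y * pt1 (Rc.map (algebraMap K S)) * emb1 Xᵀ) p q
  simp only [Matrix.mul_assoc, e2l]
  refine Finset.sum_congr rfl fun j _ => ?_
  congr 1
  simp only [e1l, e1r]
  refine Finset.sum_congr rfl fun i _ => ?_
  exact cent_comm Rc (X q.1 i) (i, j) (p.1, q.2)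

lemma PT1d (Dc : Matrix (Fin N × Fin N) (Fin N × Fin N) K)
    (X Y : Matrix (Fin N) (Fin N) S) :
    pt1 (emb1 X * Dc.map (algebraMap K S) * emb2 Y)
      = pt1 (Dc.map (algebraMap K S)) * emb1 Xᵀ * emb2 Y := by
  ext p q
  show (emb1 X * Dc.map (algebraMap K S) * emb2 Y) (q.1, p.2) (p.1, q.2)
      = (pt1 (Dc.map (algebraMap K S)) * emb1 Xᵀ * emb2 Y) p q
  conv_lhs => rw [Matrix.mul_assoc]
  rw [e1l]
  simp only [e2r, e1r, Finset.mul_sum]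
  rw [Finset.sum_comm]
  refine Finset.sum_congr rfl fun j _ => ?_
  rw [Finset.sum_mul]
  refine Finset.sum_congr rfl fun i _ => ?_
  rw [← mul_assoc]
  congr 1
  exact cent_comm Dc (X q.1 i) (i, p.2) (p.1, j)

end Helpers8
section Helpers9

variable {N : ℕ} {K : Type*} [Field K] {S : Type*} [Ring S] [Algebra K S]

lemma T1 (Rc : Matrix (Fin N × Fin N) (Fin N × Fin N) K)
    (X Y : Matrix (Fin N) (Fin N) S) :
    (Rc.map (algebraMap K S) * emb1 X * emb2 Y)ᵀ
      = emb1 Xᵀ * emb2 Yᵀ * (Rc.map (algebraMap K S))ᵀ := by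
  ext p q
  show (Rc.map (algebraMap K S) * emb1 X * emb2 Y) q p
      = (emb1 Xᵀ * emb2 Yᵀ * (Rc.map (algebraMap K S))ᵀ) p q
  conv_rhs => rw [Matrix.mul_assoc]
  rw [e1l]
  simp only [e2r, e1r, e2l, Finset.mul_sum]
  rw [Finset.sum_comm]
  refine Finset.sum_congr rfl fun j _ => ?_
  rw [Finset.sum_mul]
  refine Finset.sum_congr rfl fun i _ => ?_
  show Rc.map (algebraMap K S) q (i, j) * X i p.1 * Y j p.2
      = Xᵀ p.1 i * (Yᵀ p.2 j * (Rc.map (algebraMap K S))ᵀ (i, j) q)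
  rw [Matrix.transpose_apply, Matrix.transpose_apply, Matrix.transpose_apply,
    mul_assoc, ← cent_comm Rc (X i p.1 * Y j p.2) q (i, j), mul_assoc]

lemma T2 (Rc : Matrix (Fin N × Fin N) (Fin N × Fin N) K)
    (X Y : Matrix (Fin N) (Fin N) S) :
    (emb2 Y * emb1 X * Rc.map (algebraMap K S))ᵀ
      = (Rc.map (algebraMap K S))ᵀ * emb2 Yᵀ * emb1 Xᵀ := by
  ext p q
  show (emb2 Y * emb1 X * Rc.map (algebraMap K S)) q p
      = ((Rc.map (algebraMap K S))ᵀ * emb2 Yᵀ * emb1 Xᵀ) p q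
  conv_lhs => rw [Matrix.mul_assoc]
  rw [e2l]
  simp only [e1l, e1r, e2r, Finset.mul_sum]
  rw [Finset.sum_comm]
  refine Finset.sum_congr rfl fun i _ => ?_
  rw [Finset.sum_mul]
  refine Finset.sum_congr rfl fun j _ => ?_
  show Y q.2 j * (X q.1 i * Rc.map (algebraMap K S) (i, j) p)
      = (Rc.map (algebraMap K S))ᵀ p (i, j) * Yᵀ j q.2 * Xᵀ i q.1
  rw [Matrix.transpose_apply, Matrix.transpose_apply, Matrix.transpose_apply,
    cent_comm Rc (X q.1 i) (i, j) p, ← mul_assoc, cent_comm Rc (Y q.2 j) (i, j) p]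

end Helpers9
section Helpers10

variable {N : ℕ} {S : Type*} [Ring S]

lemma conjP3 (X Y Z : Matrix (Fin N × Fin N) (Fin N × Fin N) S) :
    permMat N S * (X * Y * Z) * permMat N S
      = (permMat N S * X * permMat N S) * (permMat N S * Y * permMat N S)
        * (permMat N S * Z * permMat N S) := by
  have pp : ∀ W : Matrix (Fin N × Fin N) (Fin N × Fin N) S,
      permMat N S * (permMat N S * W) = W := by
    intro W
    rw [← Matrix.mul_assoc, permMat_mul_permMat, Matrix.one_mul]
  simp only [Matrix.mul_assoc, pp]

end Helpers10


/-- quantum automorphism. If quantum matrices `A`, `B` satisfy the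
quantum reflection-type exchange relations (a), (b), (c) (and the space-swapped
version of (c)), then `Ã = B·A·Bᵀ` again satisfies relation (a). -/
theorem quantum_automorphism (N : ℕ) (hN : 1 ≤ N)
    (K : Type*) [Field K] [CharZero K] (s : K) (hs : s ≠ 0) (q : K) (hq : q = s ^ 2)
    (S : Type*) [Ring S] [Algebra K S]
    (A B : Matrix (Fin N) (Fin N) S)
    (RS : Matrix (Fin N × Fin N) (Fin N × Fin N) S)
    (RSi : Matrix (Fin N × Fin N) (Fin N × Fin N) S)
    (hRS : RS = (Rq N K q s).map (algebraMap K S))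
    (hRSi : RSi = (Rq N K q⁻¹ s⁻¹).map (algebraMap K S))
    (ha : RS * emb1 A * pt1 RS * emb2 A = emb2 A * pt1 RS * emb1 A * RS)
    (hb : RS * emb1 B * emb2 B = emb2 B * emb1 B * RS)
    (hc : emb2 A * emb1 B * RS = emb1 B * pt2 RSi * emb2 A)
    (hc' : emb1 A * emb2 B * (permMat N S * RS * permMat N S)
        = emb2 B * (permMat N S * pt2 RSi * permMat N S) * emb1 A) :
    RS * emb1 (B * A * Bᵀ) * pt1 RS * emb2 (B * A * Bᵀ)
      = emb2 (B * A * Bᵀ) * pt1 RS * emb1 (B * A * Bᵀ) * RS := by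
  subst hRS
  subst hRSi
  -- abbreviations
  set R : Matrix (Fin N × Fin N) (Fin N × Fin N) S := (Rq N K q s).map (algebraMap K S)
    with hR
  set Ri : Matrix (Fin N × Fin N) (Fin N × Fin N) S :=
    (Rq N K q⁻¹ s⁻¹).map (algebraMap K S) with hRi
  -- scalar facts over S
  have F1 : R * Ri = 1 := by
    rw [hR, hRi, ← Matrix.map_mul, Rq_mul_Rq_inv hq hs, Matrix.map_one _ (map_zero _) (map_one _)]
  have F2 : Ri * R = 1 := by
    rw [hR, hRi, ← Matrix.map_mul, Rq_inv_mul_Rq hq hs, Matrix.map_one _ (map_zero _) (map_one _)]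
  have F3 : R * pt1 R = pt1 R * R := by
    rw [hR, pt1_map, ← Matrix.map_mul, ← Matrix.map_mul, Rq_comm_pt1 hq hs]
  have F4 : Ri * pt1 R = pt1 R * Ri := by
    rw [hR, hRi, pt1_map, ← Matrix.map_mul, ← Matrix.map_mul, Rq_inv_comm_pt1 hq hs]
  have F5 : R * pt2 Ri = pt2 Ri * R := by
    rw [hR, hRi, pt2_map, ← Matrix.map_mul, ← Matrix.map_mul, Rq_comm_pt2_inv hq hs]
  have F6 : Rᵀ * pt1 R = pt1 R * Rᵀ := by
    rw [hR, pt1_map, transpose_map', ← Matrix.map_mul, ← Matrix.map_mul,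
      Rq_transpose_comm_pt1 hq hs]
  have F7 : Rᵀ * Riᵀ = 1 := by
    rw [hR, hRi, transpose_map', transpose_map', ← Matrix.map_mul, ← Matrix.transpose_mul,
      Rq_inv_mul_Rq hq hs, Matrix.transpose_one, Matrix.map_one _ (map_zero _) (map_one _)]
  have F8 : Riᵀ * Rᵀ = 1 := by
    rw [hR, hRi, transpose_map', transpose_map', ← Matrix.map_mul, ← Matrix.transpose_mul,
      Rq_mul_Rq_inv hq hs, Matrix.transpose_one, Matrix.map_one _ (map_zero _) (map_one _)]
  -- permutation facts over S
  have G1 : permMat N S * R * permMat N S = Rᵀ := by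
    rw [hR, ← permMat_map (K := K), ← Matrix.map_mul, ← Matrix.map_mul, conjP_Rq, transpose_map']
  have G3 : permMat N S * pt2 Ri * permMat N S = pt2 Ri := by
    rw [hRi, pt2_map, ← permMat_map (K := K), ← Matrix.map_mul, ← Matrix.map_mul, ← pt2_map,
      conjP_pt2_Rq, pt2_map]
  have G2 : permMat N S * pt1 R * permMat N S = pt1 R := by
    rw [hR, pt1_map, ← permMat_map (K := K), ← Matrix.map_mul, ← Matrix.map_mul, ← pt1_map,
      conjP_pt1_Rq, pt1_map]
  have G4 : permMat N S * Riᵀ * permMat N S = Ri := by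
    rw [hRi, transpose_map', ← permMat_map (K := K), ← Matrix.map_mul, ← Matrix.map_mul,
      conjP_Rq_transpose]
  have G5 : permMat N S * Rᵀ * permMat N S = R := by
    rw [hR, transpose_map', ← permMat_map (K := K), ← Matrix.map_mul, ← Matrix.map_mul,
      conjP_Rq_transpose]
  -- derived exchange relations
  have hi : emb1 Bᵀ * pt1 R * emb2 B = emb2 B * pt1 R * emb1 Bᵀ := by
    have h := congrArg pt1 hb
    rwa [hR, PT1a, PT1b] at h
  have hcpp : emb2 A * pt1 R * emb1 Bᵀ = Riᵀ * emb1 Bᵀ * emb2 A := by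
    have h := congrArg pt1 hc
    rw [hR, hRi, pt2_map, PT1b, PT1d, pt1_map (pt2 (Rq N K q⁻¹ s⁻¹)), pt1_pt2_eq_transpose, ← transpose_map'] at h
    exact h
  have hj : emb1 Bᵀ * emb2 Bᵀ * Rᵀ = Rᵀ * emb2 Bᵀ * emb1 Bᵀ := by
    have h := congrArg Matrix.transpose hb
    rwa [hR, T1, T2] at h
  -- permutation-conjugated versions
  have hi' : emb2 Bᵀ * pt1 R * emb1 B = emb1 B * pt1 R * emb2 Bᵀ := by
    have h := congrArg (fun M => permMat N S * M * permMat N S) hi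
    simp only [conjP3, conjP_emb1, conjP_emb2, G2] at h
    exact h
  have hcppp : emb1 A * pt1 R * emb2 Bᵀ = Ri * emb2 Bᵀ * emb1 A := by
    have h := congrArg (fun M => permMat N S * M * permMat N S) hcpp
    simp only [conjP3, conjP_emb1, conjP_emb2, G2, G4] at h
    exact h
  have hjj : R * emb1 Bᵀ * emb2 Bᵀ = emb2 Bᵀ * emb1 Bᵀ * R := by
    have h := congrArg (fun M => permMat N S * M * permMat N S) hj
    simp only [conjP3, conjP_emb1, conjP_emb2, G5] at h
    -- h : emb2 Bᵀ * emb1 Bᵀ * R = R * emb1 Bᵀ * emb2 Bᵀ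
    exact h.symm
  have hc2 : emb1 A * emb2 B * Rᵀ = emb2 B * pt2 Ri * emb1 A := by
    rw [← G1, ← G3]; exact hc'
  -- z-forms
  have z1 : ∀ Z, emb1 Bᵀ * (pt1 R * (emb2 B * Z)) = emb2 B * (pt1 R * (emb1 Bᵀ * Z)) := by
    intro Z; have h := congrArg (· * Z) hi; simpa only [Matrix.mul_assoc] using h
  have z2 : ∀ Z, emb1 Bᵀ * (emb2 A * Z)
      = Rᵀ * (emb2 A * (pt1 R * (emb1 Bᵀ * Z))) := by
    intro Z
    have m : emb1 Bᵀ * emb2 A = Rᵀ * (emb2 A * pt1 R * emb1 Bᵀ) := by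
      rw [hcpp, ← Matrix.mul_assoc, ← Matrix.mul_assoc, F7, Matrix.one_mul]
    have h := congrArg (· * Z) m
    simpa only [Matrix.mul_assoc] using h
  have z3 : ∀ Z, emb1 A * (emb2 B * Z)
      = emb2 B * (pt2 Ri * (emb1 A * (Riᵀ * Z))) := by
    intro Z
    have m : emb1 A * emb2 B = emb2 B * pt2 Ri * emb1 A * Riᵀ := by
      have h := congrArg (· * Riᵀ) hc2
      simpa only [Matrix.mul_assoc, F7, Matrix.mul_one] using h
    have h := congrArg (· * Z) m
    simpa only [Matrix.mul_assoc] using h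
  have z4 : ∀ Z, Riᵀ * (pt1 R * (Rᵀ * Z)) = pt1 R * Z := by
    intro Z
    have m : Riᵀ * (pt1 R * Rᵀ) = pt1 R := by
      rw [← F6, ← Matrix.mul_assoc, F8, Matrix.one_mul]
    have h := congrArg (· * Z) m
    simpa only [Matrix.mul_assoc] using h
  have z5 : ∀ Z, R * (emb1 B * (emb2 B * Z)) = emb2 B * (emb1 B * (R * Z)) := by
    intro Z; have h := congrArg (· * Z) hb; simpa only [Matrix.mul_assoc] using h
  have z6 : ∀ Z, R * (pt2 Ri * Z) = pt2 Ri * (R * Z) := by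
    intro Z; have h := congrArg (· * Z) F5; simpa only [Matrix.mul_assoc] using h
  have z7 : ∀ Z, R * (emb1 A * (pt1 R * (emb2 A * Z)))
      = emb2 A * (pt1 R * (emb1 A * (R * Z))) := by
    intro Z; have h := congrArg (· * Z) ha; simpa only [Matrix.mul_assoc] using h
  have z8 : ∀ Z, R * (pt1 R * Z) = pt1 R * (R * Z) := by
    intro Z; have h := congrArg (· * Z) F3; simpa only [Matrix.mul_assoc] using h
  have hj9 : R * (emb1 Bᵀ * emb2 Bᵀ) = emb2 Bᵀ * (emb1 Bᵀ * R) := by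
    have h := hjj
    simpa only [Matrix.mul_assoc] using h
  have z1' : ∀ Z, emb2 Bᵀ * (pt1 R * (emb1 B * Z)) = emb1 B * (pt1 R * (emb2 Bᵀ * Z)) := by
    intro Z; have h := congrArg (· * Z) hi'; simpa only [Matrix.mul_assoc] using h
  have z2' : ∀ Z, emb2 Bᵀ * (emb1 A * Z)
      = R * (emb1 A * (pt1 R * (emb2 Bᵀ * Z))) := by
    intro Z
    have m : emb2 Bᵀ * emb1 A = R * (emb1 A * pt1 R * emb2 Bᵀ) := by
      rw [hcppp, ← Matrix.mul_assoc, ← Matrix.mul_assoc, F1, Matrix.one_mul]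
    have h := congrArg (· * Z) m
    simpa only [Matrix.mul_assoc] using h
  have z3' : ∀ Z, emb2 A * (emb1 B * Z)
      = emb1 B * (pt2 Ri * (emb2 A * (Ri * Z))) := by
    intro Z
    have m : emb2 A * emb1 B = emb1 B * pt2 Ri * emb2 A * Ri := by
      have h := congrArg (· * Ri) hc
      simpa only [Matrix.mul_assoc, F1, Matrix.mul_one] using h
    have h := congrArg (· * Z) m
    simpa only [Matrix.mul_assoc] using h
  have z4' : ∀ Z, Ri * (pt1 R * (R * Z)) = pt1 R * Z := by
    intro Z
    have m : Ri * (pt1 R * R) = pt1 R := by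
      rw [← F3, ← Matrix.mul_assoc, F2, Matrix.one_mul]
    have h := congrArg (· * Z) m
    simpa only [Matrix.mul_assoc] using h
  -- main chain
  have LHS : R * (emb1 B * (emb1 A * (emb1 Bᵀ * (pt1 R * (emb2 B * (emb2 A * emb2 Bᵀ))))))
      = emb2 B * (emb1 B * (pt2 Ri * (emb2 A * (pt1 R * (emb1 A * (pt1 R *
          (emb2 Bᵀ * (emb1 Bᵀ * R)))))))) := by
    calc R * (emb1 B * (emb1 A * (emb1 Bᵀ * (pt1 R * (emb2 B * (emb2 A * emb2 Bᵀ))))))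
        = R * (emb1 B * (emb1 A * (emb2 B * (pt1 R * (emb1 Bᵀ * (emb2 A * emb2 Bᵀ)))))) := by
          rw [z1]
      _ = R * (emb1 B * (emb1 A * (emb2 B * (pt1 R * (Rᵀ * (emb2 A * (pt1 R *
            (emb1 Bᵀ * emb2 Bᵀ)))))))) := by rw [z2]
      _ = R * (emb1 B * (emb2 B * (pt2 Ri * (emb1 A * (Riᵀ * (pt1 R * (Rᵀ * (emb2 A *
            (pt1 R * (emb1 Bᵀ * emb2 Bᵀ)))))))))) := by rw [z3]
      _ = R * (emb1 B * (emb2 B * (pt2 Ri * (emb1 A * (pt1 R * (emb2 A *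
            (pt1 R * (emb1 Bᵀ * emb2 Bᵀ)))))))) := by rw [z4]
      _ = emb2 B * (emb1 B * (R * (pt2 Ri * (emb1 A * (pt1 R * (emb2 A *
            (pt1 R * (emb1 Bᵀ * emb2 Bᵀ)))))))) := by rw [z5]
      _ = emb2 B * (emb1 B * (pt2 Ri * (R * (emb1 A * (pt1 R * (emb2 A *
            (pt1 R * (emb1 Bᵀ * emb2 Bᵀ)))))))) := by rw [z6]
      _ = emb2 B * (emb1 B * (pt2 Ri * (emb2 A * (pt1 R * (emb1 A * (R *
            (pt1 R * (emb1 Bᵀ * emb2 Bᵀ)))))))) := by rw [z7]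
      _ = emb2 B * (emb1 B * (pt2 Ri * (emb2 A * (pt1 R * (emb1 A * (pt1 R *
            (R * (emb1 Bᵀ * emb2 Bᵀ)))))))) := by rw [z8]
      _ = emb2 B * (emb1 B * (pt2 Ri * (emb2 A * (pt1 R * (emb1 A * (pt1 R *
            (emb2 Bᵀ * (emb1 Bᵀ * R)))))))) := by rw [hj9]
  have RHS : emb2 B * (emb2 A * (emb2 Bᵀ * (pt1 R * (emb1 B * (emb1 A * (emb1 Bᵀ * R))))))
      = emb2 B * (emb1 B * (pt2 Ri * (emb2 A * (pt1 R * (emb1 A * (pt1 R *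
          (emb2 Bᵀ * (emb1 Bᵀ * R)))))))) := by
    calc emb2 B * (emb2 A * (emb2 Bᵀ * (pt1 R * (emb1 B * (emb1 A * (emb1 Bᵀ * R))))))
        = emb2 B * (emb2 A * (emb1 B * (pt1 R * (emb2 Bᵀ * (emb1 A * (emb1 Bᵀ * R)))))) := by
          rw [z1']
      _ = emb2 B * (emb2 A * (emb1 B * (pt1 R * (R * (emb1 A * (pt1 R * (emb2 Bᵀ *
            (emb1 Bᵀ * R)))))))) := by rw [z2']
      _ = emb2 B * (emb1 B * (pt2 Ri * (emb2 A * (Ri * (pt1 R * (R * (emb1 A * (pt1 R *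
            (emb2 Bᵀ * (emb1 Bᵀ * R)))))))))) := by rw [z3']
      _ = emb2 B * (emb1 B * (pt2 Ri * (emb2 A * (pt1 R * (emb1 A * (pt1 R *
            (emb2 Bᵀ * (emb1 Bᵀ * R)))))))) := by rw [z4']
  rw [emb1_mul, emb1_mul, emb2_mul, emb2_mul]
  simp only [Matrix.mul_assoc]
  rw [LHS, RHS]
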